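/- Let μ be a probability measure on ℝ with finite first moment. Then the Call function is the Fenchel dual of λ ↦ λ·AVaR_μ(λ): for every K ∈ ℝ, C_μ(K) = sup_{λ ∈ (0,1)} ( λ·AVaR_μ(λ) − λK ). -/

import Mathlib

open MeasureTheory Set Filter Topology

/-- Tail function `μ([x,∞))`. -/
noncomputable def tailFn (μ : Measure ℝ) (x : ℝ) : ℝ := (μ (Ici x)).toReal

/-- Tail quantile function: left-continuous inverse of the tail function. -/
noncomputable def tailQ (μ : Measure ℝ) (l : ℝ) : ℝ := sInf {x : ℝ | tailFn μ x < l}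

/-- Call function `C_μ(K) = ∫ (s-K)⁺ μ(ds)`. -/
noncomputable def callFn (μ : Measure ℝ) (K : ℝ) : ℝ := ∫ s, max (s - K) 0 ∂μ

/-- Average Value at Risk at level `l`. -/
noncomputable def avar (μ : Measure ℝ) (l : ℝ) : ℝ := (1 / l) * ∫ u in (0 : ℝ)..l, tailQ μ u

/-- Hardy–Littlewood transform of `μ`: the law of `AVaR_μ(ξ)` for `ξ` uniform on `[0,1]`. -/
noncomputable def hlTransform (μ : Measure ℝ) : Measure ℝ :=
  Measure.map (avar μ) (volume.restrict (Ioc (0 : ℝ) 1))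

section
variable {μ : Measure ℝ} [IsProbabilityMeasure μ]

lemma tailFn_anti : Antitone (tailFn μ) := fun x y hxy =>
  ENNReal.toReal_mono (measure_ne_top μ _) (measure_mono (Ici_subset_Ici.mpr hxy))

lemma tailFn_le_one (x : ℝ) : tailFn μ x ≤ 1 := by
  have := prob_le_one (μ := μ) (s := Ici x)
  simpa [tailFn] using ENNReal.toReal_mono ENNReal.one_ne_top this

lemma tailFn_nonneg (x : ℝ) : 0 ≤ tailFn μ x := ENNReal.toReal_nonneg

lemma S_nonempty {u : ℝ} (hu : 0 < u) : {x : ℝ | tailFn μ x < u}.Nonempty := by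
  have h1 : Tendsto (fun n : ℕ => μ (Ici (n : ℝ))) atTop (𝓝 (μ (⋂ n : ℕ, Ici (n : ℝ)))) := by
    apply tendsto_measure_iInter_atTop (fun n => (measurableSet_Ici).nullMeasurableSet)
      (fun m n hmn => Ici_subset_Ici.mpr (by exact_mod_cast hmn)) ⟨0, measure_ne_top μ _⟩
  have h2 : (⋂ n : ℕ, Ici (n : ℝ)) = ∅ := by
    ext x; simp only [mem_iInter, mem_Ici, mem_empty_iff_false, iff_false, not_forall, not_le]
    obtain ⟨n, hn⟩ := exists_nat_gt x; exact ⟨n, hn⟩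
  rw [h2, measure_empty] at h1
  have h3 : ∀ᶠ n : ℕ in atTop, μ (Ici (n : ℝ)) < ENNReal.ofReal u :=
    h1.eventually_lt_const (by simpa using hu)
  obtain ⟨n, hn⟩ := h3.exists
  refine ⟨n, ?_⟩
  have := ENNReal.toReal_strict_mono ENNReal.ofReal_ne_top hn
  simpa [tailFn, ENNReal.toReal_ofReal hu.le] using this

lemma S_bddBelow {u : ℝ} (hu : u < 1) : BddBelow {x : ℝ | tailFn μ x < u} := by
  rcases le_or_gt u 0 with h | h
  · have : {x : ℝ | tailFn μ x < u} = ∅ := by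
      ext x; simp only [mem_setOf_eq, mem_empty_iff_false, iff_false, not_lt]
      exact le_trans h (tailFn_nonneg x)
    rw [this]; exact bddBelow_empty
  · have h1 : Tendsto (fun x : ℝ => μ (Ici x)) atBot (𝓝 (μ univ)) := tendsto_measure_Ici_atBot μ
    have h2 : ∀ᶠ x : ℝ in atBot, ENNReal.ofReal u < μ (Ici x) := by
      apply h1.eventually_const_lt
      rw [measure_univ]
      exact (ENNReal.ofReal_lt_one).mpr hu
    rw [eventually_atBot] at h2
    obtain ⟨y, hy⟩ := h2
    refine ⟨y, fun z hz => ?_⟩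
    by_contra hlt
    push_neg at hlt
    have := hy z hlt.le
    have h4 : u < tailFn μ z := by
      have := ENNReal.toReal_strict_mono (measure_ne_top μ _) this
      simpa [tailFn, ENNReal.toReal_ofReal h.le] using this
    exact absurd hz (by simp only [mem_setOf_eq, not_lt]; exact h4.le)
  
end

section
variable {μ : Measure ℝ} [IsProbabilityMeasure μ]

lemma tailQ_le_of_lt {u x : ℝ} (hu : u < 1) (hx : tailFn μ x < u) : tailQ μ u ≤ x :=
  csInf_le (S_bddBelow hu) hx

lemma le_tailFn_of_lt_tailQ {u x : ℝ} (hu : u < 1) (hx : x < tailQ μ u) : u ≤ tailFn μ x := by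
  by_contra h
  push_neg at h
  exact absurd hx (not_lt.mpr (tailQ_le_of_lt hu h))

lemma le_tailQ_of_le_tailFn {u x : ℝ} (hu : 0 < u) (hx : u ≤ tailFn μ x) : x ≤ tailQ μ u := by
  refine le_csInf (S_nonempty hu) (fun z hz => ?_)
  by_contra h
  push_neg at h
  exact absurd hz (by simp only [mem_setOf_eq, not_lt]; exact le_trans hx (tailFn_anti h.le))

lemma lt_tailQ_of_lt_Ioi {u x : ℝ} (hu : 0 < u) (hx : u < (μ (Ioi x)).toReal) :
    x < tailQ μ u := by
  have hUnion : (⋃ n : ℕ, Ici (x + 1 / (n + 1))) = Ioi x := by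
    ext y
    simp only [mem_iUnion, mem_Ici, mem_Ioi]
    constructor
    · rintro ⟨n, hn⟩
      have : (0:ℝ) < 1 / (n + 1) := by positivity
      linarith
    · intro hy
      obtain ⟨n, hn⟩ := exists_nat_one_div_lt (sub_pos.mpr hy)
      exact ⟨n, by linarith⟩
  have h1 : Tendsto (fun n : ℕ => μ (Ici (x + 1 / (n + 1)))) atTop (𝓝 (μ (Ioi x))) := by
    rw [← hUnion]
    apply tendsto_measure_iUnion_atTop
    intro m n hmn
    apply Ici_subset_Ici.mpr
    have : (1:ℝ) / (n + 1) ≤ 1 / (m + 1) := by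
      apply one_div_le_one_div_of_le (by positivity)
      have : (m:ℝ) ≤ n := Nat.cast_le.mpr hmn
      linarith
    linarith
  have h2 : ENNReal.ofReal u < μ (Ioi x) := by
    rw [ENNReal.ofReal_lt_iff_lt_toReal hu.le (measure_ne_top μ _)]
    exact hx
  obtain ⟨n, hn⟩ := (h1.eventually_const_lt h2).exists
  have h3 : u ≤ tailFn μ (x + 1 / (n + 1)) := by
    have := ENNReal.toReal_mono (measure_ne_top μ _) hn.le
    simpa [tailFn, ENNReal.toReal_ofReal hu.le] using this
  have h4 := le_tailQ_of_le_tailFn hu h3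
  have : (0:ℝ) < 1 / (n + 1) := by positivity
  linarith

lemma tailQ_antiOn : AntitoneOn (tailQ μ) (Ioo (0:ℝ) 1) := by
  intro u hu v hv huv
  exact csInf_le_csInf (S_bddBelow hv.2)  (S_nonempty hu.1)
    (fun x hx => lt_of_lt_of_le hx huv)

end

section
variable {μ : Measure ℝ} [IsProbabilityMeasure μ]

lemma tailQ_aemeasurable_Icc {a b : ℝ} (ha0 : 0 < a) (hab : a ≤ b) (hb1 : b < 1) :
    AEMeasurable (tailQ μ) (volume.restrict (Icc a b)) := by
  have hmem : ∀ u : ℝ, max (min u b) a ∈ Ioo (0:ℝ) 1 := fun u =>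
    ⟨lt_of_lt_of_le ha0 (le_max_right _ _),
     lt_of_le_of_lt (max_le (min_le_right _ _) hab) hb1⟩
  have hanti : Antitone (fun u => tailQ μ (max (min u b) a)) := by
    intro u v huv
    exact tailQ_antiOn (hmem u) (hmem v)
      (max_le_max (min_le_min huv le_rfl) le_rfl)
  refine (hanti.measurable.aemeasurable).congr ?_
  filter_upwards [ae_restrict_mem measurableSet_Icc] with u hu
  rw [min_eq_left hu.2, max_eq_left hu.1]

lemma tailQ_aemeasurable : AEMeasurable (tailQ μ) (volume.restrict (Ioo (0:ℝ) 1)) := by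

  have hcov : (Ioo (0:ℝ) 1) = ⋃ n : ℕ, Icc (1/(n+2) : ℝ) (1 - 1/(n+2)) := by
    ext x
    simp only [mem_Ioo, mem_iUnion, mem_Icc]
    constructor
    · rintro ⟨h0, h1⟩
      obtain ⟨n, hn⟩ := exists_nat_one_div_lt (lt_min h0 (by linarith : (0:ℝ) < 1 - x))
      refine ⟨n, ?_, ?_⟩
      · have h2 : (1:ℝ)/(n+2) ≤ 1/(n+1) := by
          apply one_div_le_one_div_of_le (by positivity); linarith
        have := lt_min_iff.mp hn
        linarith [this.1]
      · have h2 : (1:ℝ)/(n+2) ≤ 1/(n+1) := by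
          apply one_div_le_one_div_of_le (by positivity); linarith
        have := lt_min_iff.mp hn
        linarith [this.2]
    · rintro ⟨n, h1, h2⟩
      have : (0:ℝ) < 1/(n+2) := by positivity
      constructor <;> linarith
  rw [hcov]
  rw [aemeasurable_iUnion_iff]
  intro n
  have h1 : (0:ℝ) < 1/(n+2) := by positivity
  have h2 : (1:ℝ)/(n+2) ≤ 1/2 := by
    apply one_div_le_one_div_of_le (by norm_num); push_cast; linarith
  exact tailQ_aemeasurable_Icc h1 (by linarith) (by linarith)

end

section
variable {μ : Measure ℝ} [IsProbabilityMeasure μ]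

lemma key_meas {x : ℝ} (hx : μ {x} = 0) :
    volume.restrict (Ioo (0:ℝ) 1) {u | x < tailQ μ u} = μ (Ioi x) := by
  have hIci : μ (Ici x) = μ (Ioi x) := (measure_congr (Ioi_ae_eq_Ici' hx)).symm
  rw [Measure.restrict_apply' measurableSet_Ioo]
  apply le_antisymm
  · calc volume ({u | x < tailQ μ u} ∩ Ioo 0 1) ≤ volume (Ioc 0 (tailFn μ x)) := by
          apply measure_mono
          rintro u ⟨hx', hu⟩
          exact ⟨hu.1, le_tailFn_of_lt_tailQ hu.2 hx'⟩
      _ = ENNReal.ofReal (tailFn μ x) := by rw [Real.volume_Ioc, sub_zero]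
      _ = μ (Ioi x) := by rw [tailFn, ENNReal.ofReal_toReal (measure_ne_top μ _), hIci]
  · have ht1 : (μ (Ioi x)).toReal ≤ 1 := by
      have := prob_le_one (μ := μ) (s := Ioi x)
      simpa using ENNReal.toReal_mono ENNReal.one_ne_top this
    calc μ (Ioi x) = volume (Ioo (0:ℝ) ((μ (Ioi x)).toReal)) := by
          rw [Real.volume_Ioo, sub_zero, ENNReal.ofReal_toReal (measure_ne_top μ _)]
      _ ≤ volume ({u | x < tailQ μ u} ∩ Ioo 0 1) := by
          apply measure_mono
          intro u hu
          refine ⟨lt_tailQ_of_lt_Ioi hu.1 hu.2, hu.1, lt_of_lt_of_le hu.2 ht1⟩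

lemma atoms_countable : Set.Countable {y : ℝ | μ {y} ≠ 0} := by
  have h := Measure.countable_meas_level_set_pos (μ := μ) (g := id) measurable_id
  convert h using 1
  ext y
  simp only [mem_setOf_eq, id_eq, setOf_eq_eq_singleton, pos_iff_ne_zero]

lemma lint_eq (K : ℝ) :
    ∫⁻ u in Ioo (0:ℝ) 1, ENNReal.ofReal (max (tailQ μ u - K) 0)
      = ∫⁻ s, ENNReal.ofReal (max (s - K) 0) ∂μ := by
  have h1 := lintegral_eq_lintegral_meas_lt (volume.restrict (Ioo (0:ℝ) 1))
      (f := fun u => max (tailQ μ u - K) 0)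
      (Eventually.of_forall (fun u => le_max_right _ _))
      ((tailQ_aemeasurable.sub aemeasurable_const).max aemeasurable_const)
  have h2 := lintegral_eq_lintegral_meas_lt μ (f := fun s => max (s - K) 0)
      (Eventually.of_forall (fun s => le_max_right _ _))
      ((measurable_id.sub measurable_const).max measurable_const).aemeasurable
  rw [h1, h2]
  apply lintegral_congr_ae
  have hB : ∀ᵐ t : ℝ ∂volume, μ {K + t} = 0 := by
    have hc : Set.Countable {t : ℝ | μ {K + t} ≠ 0} := by
      have : {t : ℝ | μ {K + t} ≠ 0} ⊆ (fun y => y - K) '' {y : ℝ | μ {y} ≠ 0} := by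
        intro t ht
        exact ⟨K + t, ht, by ring⟩
      exact (atoms_countable.image _).mono this
    have h0 := hc.measure_zero volume
    rw [ae_iff]
    exact h0
  filter_upwards [ae_restrict_of_ae hB, ae_restrict_mem measurableSet_Ioi] with t ht htpos
  have hset1 : {u : ℝ | t < max (tailQ μ u - K) 0} = {u | K + t < tailQ μ u} := by
    ext u
    simp only [mem_setOf_eq, lt_max_iff]
    constructor
    · rintro (h | h)
      · linarith
      · exact absurd htpos (not_lt.mpr h.le)
    · intro h; left; linarith
  have hset2 : {s : ℝ | t < max (s - K) 0} = Ioi (K + t) := by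
    ext s
    simp only [mem_setOf_eq, lt_max_iff, mem_Ioi]
    constructor
    · rintro (h | h)
      · linarith
      · exact absurd htpos (not_lt.mpr h.le)
    · intro h; left; linarith
  rw [hset1, hset2, key_meas ht]

end

section
variable {μ : Measure ℝ} [IsProbabilityMeasure μ]

lemma max_integrable (hμ : Integrable id μ) (K : ℝ) :
    Integrable (fun s => max (s - K) 0) μ := by
  have h1 : Integrable (fun s : ℝ => s - K) μ := by
    have := hμ.sub (integrable_const K)
    exact this
  exact h1.pos_part

lemma tailQmax_integrable (hμ : Integrable id μ) (K : ℝ) :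
    Integrable (fun u => max (tailQ μ u - K) 0) (volume.restrict (Ioo (0:ℝ) 1)) := by
  refine ⟨((tailQ_aemeasurable.sub aemeasurable_const).max
    aemeasurable_const).aestronglyMeasurable, ?_⟩
  rw [hasFiniteIntegral_iff_ofReal (f := fun u => max (tailQ μ u - K) 0)
    (Eventually.of_forall (fun u => le_max_right _ _)), lint_eq K]
  exact (max_integrable hμ K).lintegral_lt_top

lemma callFn_eq (hμ : Integrable id μ) (K : ℝ) :
    callFn μ K = ∫ u in Ioo (0:ℝ) 1, max (tailQ μ u - K) 0 := by
  have e1 := integral_eq_lintegral_of_nonneg_ae (μ := μ) (f := fun s => max (s - K) 0)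
    (Eventually.of_forall (fun s => le_max_right _ _))
    ((measurable_id.sub measurable_const).max measurable_const).aestronglyMeasurable
  have e2 := integral_eq_lintegral_of_nonneg_ae (μ := volume.restrict (Ioo (0:ℝ) 1))
    (f := fun u => max (tailQ μ u - K) 0)
    (Eventually.of_forall (fun u => le_max_right _ _))
    ((tailQ_aemeasurable.sub aemeasurable_const).max aemeasurable_const).aestronglyMeasurable
  rw [callFn, e1, e2, lint_eq K]

lemma tailQ_integrableOn (hμ : Integrable id μ) {l : ℝ} (hl : l ∈ Ioo (0:ℝ) 1) :
    IntegrableOn (tailQ μ) (Ioo 0 l) volume := by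
  have hsub : Ioo (0:ℝ) l ⊆ Ioo (0:ℝ) 1 := Ioo_subset_Ioo le_rfl hl.2.le
  have hg : IntegrableOn (fun u => max (tailQ μ u) 0 + |tailQ μ l|) (Ioo 0 l) volume := by
    apply Integrable.add
    · have h0 : IntegrableOn (fun u => max (tailQ μ u - 0) 0) (Ioo (0:ℝ) 1) volume :=
        tailQmax_integrable hμ 0
      simp only [sub_zero] at h0
      exact h0.mono_set hsub
    · exact (integrableOn_const_iff).mpr (Or.inr measure_Ioo_lt_top)
  refine hg.integrable.mono ?_ ?_
  · exact (tailQ_aemeasurable.mono_measure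
      (Measure.restrict_mono hsub le_rfl)).aestronglyMeasurable
  · filter_upwards [ae_restrict_mem measurableSet_Ioo] with u hu
    have hmono : tailQ μ l ≤ tailQ μ u := tailQ_antiOn ⟨hu.1, hu.2.trans hl.2⟩ hl hu.2.le
    have hb : |tailQ μ u| ≤ max (tailQ μ u) 0 + |tailQ μ l| := by
      rcases le_or_gt 0 (tailQ μ u) with h | h
      · rw [abs_of_nonneg h]
        have := abs_nonneg (tailQ μ l)
        have := le_max_left (tailQ μ u) 0
        linarith
      · rw [abs_of_neg h]
        have h2 : -tailQ μ u ≤ -tailQ μ l := by linarith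
        have h3 : -tailQ μ l ≤ |tailQ μ l| := neg_le_abs _
        have := le_max_right (tailQ μ u) 0
        linarith
    calc ‖tailQ μ u‖ = |tailQ μ u| := rfl
      _ ≤ max (tailQ μ u) 0 + |tailQ μ l| := hb
      _ ≤ ‖max (tailQ μ u) 0 + |tailQ μ l|‖ := le_abs_self _

end

section
variable {μ : Measure ℝ} [IsProbabilityMeasure μ]

lemma avar_repr (hμ : Integrable id μ) {l : ℝ} (hl : l ∈ Ioo (0:ℝ) 1) (K : ℝ) :
    l * avar μ l - l * K = ∫ u in Ioo (0:ℝ) l, (tailQ μ u - K) := by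
  have hInt := tailQ_integrableOn hμ hl
  have h1 : ∫ u in (0:ℝ)..l, tailQ μ u = ∫ u in Ioo (0:ℝ) l, tailQ μ u := by
    rw [intervalIntegral.integral_of_le hl.1.le, integral_Ioc_eq_integral_Ioo]
  have h2 : ∫ u in Ioo (0:ℝ) l, (tailQ μ u - K)
      = (∫ u in Ioo (0:ℝ) l, tailQ μ u) - l * K := by
    rw [integral_sub hInt ((integrableOn_const_iff).mpr (Or.inr measure_Ioo_lt_top))]
    congr 1
    rw [setIntegral_const, Real.volume_real_Ioo_of_le hl.1.le, sub_zero,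
      smul_eq_mul]
  rw [avar, h1, h2]
  have hl0 : l ≠ 0 := ne_of_gt hl.1
  field_simp

lemma F_le_callFn (hμ : Integrable id μ) {l : ℝ} (hl : l ∈ Ioo (0:ℝ) 1) (K : ℝ) :
    ∫ u in Ioo (0:ℝ) l, (tailQ μ u - K) ≤ callFn μ K := by
  rw [callFn_eq hμ K]
  have hsub : Ioo (0:ℝ) l ⊆ Ioo (0:ℝ) 1 := Ioo_subset_Ioo le_rfl hl.2.le
  have hIntMax : IntegrableOn (fun u => max (tailQ μ u - K) 0) (Ioo (0:ℝ) 1) volume :=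
    tailQmax_integrable hμ K
  calc ∫ u in Ioo (0:ℝ) l, (tailQ μ u - K)
      ≤ ∫ u in Ioo (0:ℝ) l, max (tailQ μ u - K) 0 := by
        apply integral_mono ((tailQ_integrableOn hμ hl).sub
          ((integrableOn_const_iff).mpr (Or.inr measure_Ioo_lt_top))) (hIntMax.mono_set hsub)
        exact fun u => le_max_left _ _
    _ ≤ ∫ u in Ioo (0:ℝ) 1, max (tailQ μ u - K) 0 := by
        apply setIntegral_mono_set hIntMax
          (Eventually.of_forall (fun u => le_max_right _ _))
          (HasSubset.Subset.eventuallyLE hsub)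

end

theorem stmt_6 (μ : Measure ℝ) [IsProbabilityMeasure μ] (hμ : Integrable id μ) :
    ∀ K : ℝ, callFn μ K = ⨆ l : Ioo (0 : ℝ) 1, ((l : ℝ) * avar μ l - (l : ℝ) * K) := by
  intro K
  have hne : Nonempty (Ioo (0:ℝ) 1) := ⟨⟨1/2, by norm_num⟩⟩
  have hub : ∀ l : Ioo (0:ℝ) 1, (l : ℝ) * avar μ (l : ℝ) - (l : ℝ) * K ≤ callFn μ K :=
    fun l => by rw [avar_repr hμ l.2 K]; exact F_le_callFn hμ l.2 K
  have hbdd : BddAbove (range (fun l : Ioo (0:ℝ) 1 => (l : ℝ) * avar μ l - (l : ℝ) * K)) := by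
    refine ⟨callFn μ K, ?_⟩
    rintro _ ⟨l, rfl⟩
    exact hub l
  refine le_antisymm ?_ (ciSup_le hub)
  set t := tailFn μ K with htdef
  have ht1 : t ≤ 1 := tailFn_le_one K
  have ht0 : 0 ≤ t := tailFn_nonneg K
  rcases le_or_gt 1 t with h1 | h1
  · -- t = 1 : tailQ u ≥ K on (0,1)
    have hC : callFn μ K = ∫ u in Ioo (0:ℝ) 1, (tailQ μ u - K) := by
      rw [callFn_eq hμ K]
      apply setIntegral_congr_fun measurableSet_Ioo
      intro u hu
      have : K ≤ tailQ μ u := le_tailQ_of_le_tailFn hu.1 (le_trans (hu.2.le.trans h1) le_rfl)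
      simp [max_eq_left (by linarith : (0:ℝ) ≤ tailQ μ u - K)]
    have hgInt : IntegrableOn (fun u => tailQ μ u - K) (Ioo (0:ℝ) 1) volume := by
      apply (tailQmax_integrable hμ K).congr
      filter_upwards [ae_restrict_mem measurableSet_Ioo] with u hu
      have : K ≤ tailQ μ u := le_tailQ_of_le_tailFn hu.1 (hu.2.le.trans h1)
      rw [max_eq_left (by linarith)]
    set s : ℕ → Set ℝ := fun n => Ioo (0:ℝ) (1 - 1/(n+2)) with hs
    have hsm : ∀ n, MeasurableSet (s n) := fun n => measurableSet_Ioo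
    have hmono : Monotone s := by
      intro m n hmn
      apply Ioo_subset_Ioo le_rfl
      have h1 : (1:ℝ)/(n+2) ≤ 1/(m+2) := by
        apply one_div_le_one_div_of_le (by positivity)
        have : (m:ℝ) ≤ n := Nat.cast_le.mpr hmn
        linarith
      linarith
    have hU : (⋃ n, s n) = Ioo (0:ℝ) 1 := by
      ext x
      simp only [hs, mem_iUnion, mem_Ioo]
      constructor
      · rintro ⟨n, hx0, hx1⟩
        have : (0:ℝ) < 1/(n+2) := by positivity
        exact ⟨hx0, by linarith⟩
      · rintro ⟨hx0, hx1⟩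
        obtain ⟨n, hn⟩ := exists_nat_one_div_lt (by linarith : (0:ℝ) < 1 - x)
        refine ⟨n, hx0, ?_⟩
        have h2 : (1:ℝ)/(n+2) < 1/(n+1) := by
          apply one_div_lt_one_div_of_lt (by positivity); linarith
        linarith
    have htend : Tendsto (fun n => ∫ u in s n, (tailQ μ u - K)) atTop
        (𝓝 (∫ u in Ioo (0:ℝ) 1, (tailQ μ u - K))) := by
      have := tendsto_setIntegral_of_monotone hsm hmono (hU ▸ hgInt)
      rwa [hU] at this
    rw [hC]
    refine le_of_tendsto htend (Eventually.of_forall (fun n => ?_))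
    have hln : (1 - 1/(n+2) : ℝ) ∈ Ioo (0:ℝ) 1 := by
      constructor
      · have h2 : (1:ℝ)/(n+2) ≤ 1/2 := by
          apply one_div_le_one_div_of_le (by norm_num); push_cast; linarith
        linarith
      · have : (0:ℝ) < 1/(n+2) := by positivity
        linarith
    have := le_ciSup hbdd ⟨(1 - 1/(n+2) : ℝ), hln⟩
    rwa [avar_repr hμ hln K] at this
  · rcases eq_or_lt_of_le ht0 with h0 | h0
    · -- t = 0 : tailQ u ≤ K on (0,1), callFn = 0
      have hq : ∀ u ∈ Ioo (0:ℝ) 1, tailQ μ u ≤ K := by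
        intro u hu
        by_contra h
        push_neg at h
        have := le_tailFn_of_lt_tailQ hu.2 h
        rw [← htdef, ← h0] at this
        linarith [hu.1]
      have hC : callFn μ K = 0 := by
        rw [callFn_eq hμ K]
        rw [setIntegral_congr_fun measurableSet_Ioo
          (fun u hu => max_eq_right (by linarith [hq u hu] : tailQ μ u - K ≤ 0))]
        simp
      rw [hC]
      set c : ℝ := tailQ μ (1/2) with hc
      set l : ℕ → ℝ := fun n => 1/(n+2) with hldef
      have hln : ∀ n, l n ∈ Ioo (0:ℝ) 1 := by
        intro n
        constructor
        · positivity
        · have h2 : (1:ℝ)/(n+2) ≤ 1/2 := by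
            apply one_div_le_one_div_of_le (by norm_num); push_cast; linarith
          linarith
      have hlhalf : ∀ n, l n ≤ 1/2 := fun n => by
        apply one_div_le_one_div_of_le (by norm_num); push_cast; linarith
      -- lower bound for F (l n)
      have hFlow : ∀ n, l n * (c - K) ≤ ∫ u in Ioo (0:ℝ) (l n), (tailQ μ u - K) := by
        intro n
        have hint : IntegrableOn (fun u => tailQ μ u - K) (Ioo (0:ℝ) (l n)) volume :=
          (tailQ_integrableOn hμ (hln n)).sub
            ((integrableOn_const_iff).mpr (Or.inr measure_Ioo_lt_top))
        have hcint : IntegrableOn (fun _ : ℝ => c - K) (Ioo (0:ℝ) (l n)) volume :=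
          (integrableOn_const_iff).mpr (Or.inr measure_Ioo_lt_top)
        have := integral_mono_ae hcint hint ?_
        · rw [setIntegral_const, Real.volume_real_Ioo_of_le (hln n).1.le, sub_zero,
            smul_eq_mul] at this
          exact this
        · filter_upwards [ae_restrict_mem measurableSet_Ioo] with u hu
          have hu1 : u ∈ Ioo (0:ℝ) 1 := ⟨hu.1, lt_of_lt_of_le (hu.2.trans_le (hlhalf n)) (by norm_num)⟩
          have : c ≤ tailQ μ u := tailQ_antiOn hu1 (by norm_num : (1:ℝ)/2 ∈ Ioo (0:ℝ) 1)
            (le_trans hu.2.le (hlhalf n))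
          linarith
      have hFhigh : ∀ n, ∫ u in Ioo (0:ℝ) (l n), (tailQ μ u - K) ≤ 0 := by
        intro n
        apply integral_nonpos_of_ae
        filter_upwards [ae_restrict_mem measurableSet_Ioo] with u hu
        have hu1 : u ∈ Ioo (0:ℝ) 1 := ⟨hu.1, lt_of_lt_of_le (hu.2.trans_le (hlhalf n)) (by norm_num)⟩
        show tailQ μ u - K ≤ 0
        linarith [hq u hu1]
      have hl0 : Tendsto l atTop (𝓝 0) := by
        rw [hldef]
        have : Tendsto (fun n : ℕ => ((n:ℝ) + 2)) atTop atTop := by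
          apply tendsto_atTop_add_const_right
          exact tendsto_natCast_atTop_atTop
        simpa [Pi.inv_def] using this.inv_tendsto_atTop
      have htend : Tendsto (fun n => ∫ u in Ioo (0:ℝ) (l n), (tailQ μ u - K)) atTop (𝓝 0) := by
        have hm := hl0.mul_const (c - K)
        rw [zero_mul] at hm
        exact tendsto_of_tendsto_of_tendsto_of_le_of_le hm tendsto_const_nhds hFlow hFhigh
      refine le_of_tendsto htend (Eventually.of_forall (fun n => ?_))
      have := le_ciSup hbdd ⟨l n, hln n⟩
      rwa [avar_repr hμ (hln n) K] at this
    · -- 0 < t < 1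
      have htI : t ∈ Ioo (0:ℝ) 1 := ⟨h0, h1⟩
      have hC : callFn μ K = ∫ u in Ioo (0:ℝ) t, (tailQ μ u - K) := by
        rw [callFn_eq hμ K]
        have hsplit : Ioo (0:ℝ) 1 = Ioc (0:ℝ) t ∪ Ioo t 1 := (Ioc_union_Ioo_eq_Ioo h0.le h1).symm
        have hdisj : Disjoint (Ioc (0:ℝ) t) (Ioo t 1) := by
          rw [Set.disjoint_left]
          rintro u hu1 hu2
          exact absurd hu1.2 (not_le.mpr hu2.1)
        have hIM : IntegrableOn (fun u => max (tailQ μ u - K) 0) (Ioo (0:ℝ) 1) volume :=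
          tailQmax_integrable hμ K
        rw [hsplit, setIntegral_union hdisj measurableSet_Ioo
          (hIM.mono_set (by rw [hsplit]; exact subset_union_left))
          (hIM.mono_set (by rw [hsplit]; exact subset_union_right))]
        have hz : ∫ u in Ioo t 1, max (tailQ μ u - K) 0 = 0 := by
          rw [setIntegral_congr_fun measurableSet_Ioo (g := fun _ => (0:ℝ)) ?_]
          · simp
          · intro u hu
            have hqu : tailQ μ u ≤ K := by
              by_contra h
              push_neg at h
              have := le_tailFn_of_lt_tailQ hu.2 h
              rw [← htdef] at this
              linarith [hu.1]
            exact max_eq_right (by linarith)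
        have hfirst : ∫ u in Ioc (0:ℝ) t, max (tailQ μ u - K) 0
            = ∫ u in Ioc (0:ℝ) t, (tailQ μ u - K) := by
          apply setIntegral_congr_fun measurableSet_Ioc
          intro u hu
          have hu2 : u ≤ tailFn μ K := by rw [← htdef]; exact hu.2
          have : K ≤ tailQ μ u := le_tailQ_of_le_tailFn hu.1 hu2
          exact max_eq_left (by linarith)
        rw [hz, hfirst, add_zero, integral_Ioc_eq_integral_Ioo]
      rw [hC]
      have := le_ciSup hbdd ⟨t, htI⟩
      rwa [avar_repr hμ htI K] at this
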